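/- Weight of the distinguished maximal chain: with edge weights α_A^B = (−q)^{E(A,B)} where E(A,B) = −ℓ(J\B, B\A) − ℓ(B\A, A) + (2|J\B| − |I|)|(B\A)∩J'|, the weight of the chain π^{1̂} (adding J'' in increasing order, then J' in decreasing order, augmented from ∅ to J) equals (−q)^{|J'|(|J'|−1) − |J''|(|J''|−1)} · α_∅^J. -/

import Mathlib

/-- `mM K` is `min (K ∩ J')` if `K ∩ J'` is nonempty, and `max (K ∩ J'')` otherwise
(with junk value `0` when both are empty). -/
def mM (J' J'' K : Finset ℕ) : ℕ :=
  (K ∩ J').min.untopD ((K ∩ J'').max.unbotD 0)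

/-- The augmented entry `A_k` of the chain `L = (A_1, …, A_p)`: `A_0 = ∅`,
`A_k = L[k-1]` for `1 ≤ k ≤ p`, and `A_k = J` for `k > p`. -/
def elt (J : Finset ℕ) (L : List (Finset ℕ)) (k : ℕ) : Finset ℕ :=
  if k = 0 then ∅ else L.getD (k - 1) J

/-- `L` is regular at position `i₀` (`1 ≤ i₀ ≤ p`, with `A_0 = ∅`, `A_{p+1} = J`):
`|A_i| = i` for all `i ≤ i₀` and `A_{i₀} \ A_{i₀−1} = {mM(A_{i₀+1} \ A_{i₀−1})}`. -/
def RegularAt (J' J'' : Finset ℕ) (L : List (Finset ℕ)) (i₀ : ℕ) : Prop :=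
  1 ≤ i₀ ∧ i₀ ≤ L.length ∧
  (∀ i, 1 ≤ i → i ≤ i₀ → (elt (J' ∪ J'') L i).card = i) ∧
  elt (J' ∪ J'') L i₀ \ elt (J' ∪ J'') L (i₀ - 1)
    = {mM J' J'' (elt (J' ∪ J'') L (i₀ + 1) \ elt (J' ∪ J'') L (i₀ - 1))}

/-- A chain is irregular if it is regular at no position. -/
def Irregular (J' J'' : Finset ℕ) (L : List (Finset ℕ)) : Prop :=
  ∀ i₀, ¬ RegularAt J' J'' L i₀

/-- `𝔓₀`: nonempty strict chains `∅ ⊊ A_1 ⊊ ⋯ ⊊ A_p ⊊ J`. -/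
def P0 (J : Finset ℕ) : Set (List (Finset ℕ)) :=
  {L | L ≠ [] ∧ L.Chain' (· ⊂ ·) ∧ ∀ A ∈ L, ∅ ⊂ A ∧ A ⊂ J}

/-- The elements of `J''` in increasing order followed by those of `J'` in
decreasing order. -/
def sortedJ (J' J'' : Finset ℕ) : List ℕ :=
  J''.sort (· ≤ ·) ++ (J'.sort (· ≤ ·)).reverse

/-- The chain of initial segments `(A_1, …, A_m)` of a list `s`,
`A_k = {s_1, …, s_k}`. -/
def chainOf (s : List ℕ) (m : ℕ) : List (Finset ℕ) :=
  (List.range m).map (fun k => (s.take (k + 1)).toFinset)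

/-- The maximal chain `1̂`, adding the elements of `J''` in increasing order and
then those of `J'` in decreasing order, ending at `J`. -/
def oneHat (J' J'' : Finset ℕ) : List (Finset ℕ) :=
  chainOf (sortedJ J' J'') (sortedJ J' J'').length

/-- The chain `π^{1̂}`: same as `1̂` but stopping just before `J`. -/
def piOneHat (J' J'' : Finset ℕ) : List (Finset ℕ) :=
  chainOf (sortedJ J' J'') ((sortedJ J' J'').length - 1)

/-- The path `0̂ = (∅)`. -/
def zeroHat : List (Finset ℕ) := [∅]

/-- `𝔓 = 𝔓₀ ∪ {0̂, 1̂}`. -/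
def PP (J' J'' : Finset ℕ) : Set (List (Finset ℕ)) :=
  P0 (J' ∪ J'') ∪ {zeroHat, oneHat J' J''}

/-- The first gap position `i₀`: the length of the maximal initial segment of the
chain along which the set sizes increase by exactly one. -/
def gapIdx (L : List (Finset ℕ)) : ℕ :=
  ((L.zip (List.range L.length)).takeWhile
    (fun p => decide (p.1.card = p.2 + 1))).length

/-- The insertion map `℘`: inserts `B = A_{i₀} ∪ {mM(A_{i₀+1} \ A_{i₀})}` at the
first gap position; `℘(0̂) = ({min J'})` if `J' ≠ ∅`, else `({max J''})`. -/
def insMap (J' J'' : Finset ℕ) (L : List (Finset ℕ)) : List (Finset ℕ) :=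
  if L = zeroHat then [{mM J' J'' (J' ∪ J'')}]
  else
    L.take (gapIdx L) ++
      (elt (J' ∪ J'') L (gapIdx L) ∪
        {mM J' J'' (elt (J' ∪ J'') L (gapIdx L + 1) \ elt (J' ∪ J'') L (gapIdx L))})
      :: L.drop (gapIdx L)

/-- `linv S T` counts pairs `(s,t) ∈ S × T` with `s > t`. -/
def linv (S T : Finset ℕ) : ℕ := ((S ×ˢ T).filter (fun p => p.2 < p.1)).card

/-- The weight exponent
`E(A,B) = −ℓ(J\B, B\A) − ℓ(B\A, A) + (2|J\B| − |I|)|(B\A) ∩ J'|`. -/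
def wexp (I J' J'' A B : Finset ℕ) : ℤ :=
  -(linv ((J' ∪ J'') \ B) (B \ A) : ℤ) - (linv (B \ A) A : ℤ)
    + (2 * (((J' ∪ J'') \ B).card : ℤ) - (I.card : ℤ)) * (((B \ A) ∩ J').card : ℤ)

/-- The edge weight `α_A^B = (−q)^{E(A,B)}`. -/
noncomputable def alphaWt {k : Type*} [Field k] (q : k) (I J' J'' A B : Finset ℕ) : k :=
  (-q) ^ (wexp I J' J'' A B)

/-- The weight of a chain `(A_1, …, A_p)`: the product
`α_∅^{A_1} α_{A_1}^{A_2} ⋯ α_{A_p}^{J}` of the edge weights of the chain augmented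
by `∅` at the start and `J` at the end. -/
noncomputable def wt {k : Type*} [Field k] (q : k) (I J' J'' : Finset ℕ)
    (L : List (Finset ℕ)) : k :=
  ∏ i ∈ Finset.range (L.length + 1),
    alphaWt q I J' J'' (elt (J' ∪ J'') L i) (elt (J' ∪ J'') L (i + 1))

section Aux

private lemma prod_zpow' {k : Type*} [Field k] (a : k) (ha : a ≠ 0) (n : ℕ) (e : ℕ → ℤ) :
    ∏ i ∈ Finset.range n, a ^ (e i) = a ^ (∑ i ∈ Finset.range n, e i) := by
  induction n with
  | zero => simp
  | succ n ih => rw [Finset.prod_range_succ, Finset.sum_range_succ, ih, zpow_add₀ ha]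

private lemma linv_singleton_right (S : Finset ℕ) (x : ℕ) :
    linv S {x} = (S.filter (fun a => x < a)).card := by
  unfold linv
  rw [Finset.product_singleton, Finset.filter_map, Finset.card_map]
  rfl

private lemma linv_singleton_left (x : ℕ) (A : Finset ℕ) :
    linv {x} A = (A.filter (fun a => a < x)).card := by
  unfold linv
  rw [Finset.singleton_product, Finset.filter_map, Finset.card_map]
  rfl

private lemma pairwise_take_drop {α : Type*} {R : α → α → Prop} {l : List α}
    (h : l.Pairwise R) (m : ℕ) : ∀ a ∈ l.take m, ∀ b ∈ l.drop m, R a b := by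
  rw [← List.take_append_drop m l] at h
  exact (List.pairwise_append.mp h).2.2

private lemma toFinset_sdiff_take (l : List ℕ) (hl : l.Nodup) (m : ℕ) :
    l.toFinset \ (l.take m).toFinset = (l.drop m).toFinset := by
  have hu : (l.take m).toFinset ∪ (l.drop m).toFinset = l.toFinset := by
    rw [← List.toFinset_append, List.take_append_drop]
  have hnd : (l.take m ++ l.drop m).Nodup := by rw [List.take_append_drop]; exact hl
  have hdis : Disjoint (l.take m).toFinset (l.drop m).toFinset :=
    List.disjoint_toFinset_iff_disjoint.mpr (List.nodup_append'.mp hnd).2.2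
  rw [← hu, Finset.union_sdiff_cancel_left hdis]

private lemma card_toFinset_take (l : List ℕ) (hl : l.Nodup) {m : ℕ} (hm : m ≤ l.length) :
    (l.take m).toFinset.card = m := by
  rw [List.toFinset_card_of_nodup ((List.take_sublist m l).nodup hl)]
  simp [List.length_take]
  omega

private lemma card_toFinset_drop (l : List ℕ) (hl : l.Nodup) (m : ℕ) :
    (l.drop m).toFinset.card = l.length - m := by
  rw [List.toFinset_card_of_nodup ((List.drop_sublist m l).nodup hl)]
  simp [List.length_drop]

private lemma take_succ_toFinset (l : List ℕ) (i : ℕ) (h : i < l.length) :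
    (l.take (i + 1)).toFinset = insert l[i] (l.take i).toFinset := by
  rw [← List.take_concat_get h, List.concat_eq_append, List.toFinset_append]
  simp only [List.toFinset_cons, List.toFinset_nil, insert_empty_eq]
  rw [Finset.union_comm, ← Finset.insert_eq]

private lemma getElem_mem_drop (l : List ℕ) {i : ℕ} (h : i < l.length) : l[i] ∈ l.drop i := by
  have h0 : 0 < (l.drop i).length := by rw [List.length_drop]; omega
  have e : (l.drop i)[0]'h0 = l[i] := by rw [List.getElem_drop]; simp
  rw [← e]; exact List.getElem_mem h0

private lemma getElem_mem_take (l : List ℕ) {i : ℕ} (h : i < l.length) :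
    l[i] ∈ l.take (i + 1) := by
  have h0 : i < (l.take (i + 1)).length := by simp [List.length_take]; omega
  have e : (l.take (i + 1))[i]'h0 = l[i] := List.getElem_take
  rw [← e]; exact List.getElem_mem h0

private lemma sortedJ_toFinset (J' J'' : Finset ℕ) :
    (sortedJ J' J'').toFinset = J' ∪ J'' := by
  simp [sortedJ, Finset.union_comm]

private lemma sortedJ_length (J' J'' : Finset ℕ) :
    (sortedJ J' J'').length = J''.card + J'.card := by
  simp [sortedJ]

private lemma sortedJ_nodup (J' J'' : Finset ℕ) (hdisj : Disjoint J' J'') :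
    (sortedJ J' J'').Nodup := by
  refine List.nodup_append'.mpr ⟨Finset.sort_nodup _ _, List.nodup_reverse.mpr (Finset.sort_nodup _ _), ?_⟩
  intro a ha hb
  rw [List.mem_reverse, Finset.mem_sort] at hb
  rw [Finset.mem_sort] at ha
  exact Finset.disjoint_right.mp hdisj ha hb

private lemma sum_two_mul (m : ℕ) : ∑ t ∈ Finset.range m, (2 * (t : ℤ)) = m * (m - 1) := by
  induction m with
  | zero => simp
  | succ n ih => rw [Finset.sum_range_succ, ih]; push_cast; ring

private lemma sum_phase2 (m : ℕ) (c : ℤ) :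
    ∑ t ∈ Finset.range m, (2 * ((m : ℤ) - 1 - t) - c) = m * (m - 1) - m * c := by
  have h1 : ∑ t ∈ Finset.range m, (2 * ((m : ℤ) - 1 - t) - c)
      = ∑ t ∈ Finset.range m, (2 * (t : ℤ) - c) := by
    calc ∑ t ∈ Finset.range m, (2 * ((m : ℤ) - 1 - t) - c)
        = ∑ t ∈ Finset.range m, (2 * ((m - 1 - t : ℕ) : ℤ) - c) := by
          refine Finset.sum_congr rfl fun t ht => ?_
          rw [Finset.mem_range] at ht
          have : ((m - 1 - t : ℕ) : ℤ) = (m : ℤ) - 1 - t := by omega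
          rw [this]
      _ = ∑ t ∈ Finset.range m, (2 * (t : ℤ) - c) :=
          Finset.sum_range_reflect (fun j => 2 * (j : ℤ) - c) m
  rw [h1, Finset.sum_sub_distrib, sum_two_mul, Finset.sum_const, Finset.card_range,
    nsmul_eq_mul]

private lemma elt_piOneHat (J' J'' : Finset ℕ) {i : ℕ} (hi : i ≤ (sortedJ J' J'').length) :
    elt (J' ∪ J'') (piOneHat J' J'') i = ((sortedJ J' J'').take i).toFinset := by
  unfold elt piOneHat chainOf
  by_cases h0 : i = 0
  · subst h0; simp
  rw [if_neg h0]
  by_cases h1 : i - 1 < (sortedJ J' J'').length - 1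
  · rw [List.getD_eq_getElem _ _ (by simpa using h1)]
    have : i - 1 + 1 = i := by omega
    simp only [List.getElem_map, List.getElem_range, this]
  · have hin : i = (sortedJ J' J'').length := by omega
    rw [List.getD_eq_default _ _ (by simp; omega)]
    rw [hin, List.take_of_length_le (le_refl _), sortedJ_toFinset]

end Aux

private lemma step_exp (I J' J'' : Finset ℕ) (lB lr : List ℕ)
    (hBfin : lB.toFinset = J'') (hrfin : lr.toFinset = J')
    (hpB : lB.Pairwise (· < ·)) (hpr : lr.Pairwise (· > ·))
    (hnd : (lB ++ lr).Nodup)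
    (hlt : ∀ a ∈ J', ∀ b ∈ J'', a < b) {i : ℕ}
    (hi : i < (lB ++ lr).length) :
    wexp I J' J'' ((lB ++ lr).take i).toFinset ((lB ++ lr).take (i + 1)).toFinset
      = if i < J''.card then (1 : ℤ) - J''.card
        else 2 * ((J'.card : ℤ) + J''.card - 1 - i) - I.card := by
  have hndB : lB.Nodup := (List.nodup_append'.mp hnd).1
  have hndr : lr.Nodup := (List.nodup_append'.mp hnd).2.1
  have hlenB : lB.length = J''.card := by
    rw [← hBfin, List.toFinset_card_of_nodup hndB]
  have hlenr : lr.length = J'.card := by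
    rw [← hrfin, List.toFinset_card_of_nodup hndr]
  have hsfin : (lB ++ lr).toFinset = J' ∪ J'' := by
    rw [List.toFinset_append, hBfin, hrfin, Finset.union_comm]
  set s := lB ++ lr with hs
  have hilen : i < lB.length + lr.length := by
    have := hi; rwa [hs, List.length_append] at this
  set x := s[i]'hi with hx
  have hBA : (s.take (i + 1)).toFinset = insert x (s.take i).toFinset :=
    take_succ_toFinset s i hi
  have hxdrop : x ∈ s.drop i := getElem_mem_drop s hi
  have hxA : x ∉ (s.take i).toFinset := by
    intro hmem
    rw [List.mem_toFinset] at hmem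
    have hnd2 : (s.take i ++ s.drop i).Nodup := by rw [List.take_append_drop]; exact hnd
    exact (List.nodup_append'.mp hnd2).2.2 hmem hxdrop
  have hBdiff : (s.take (i + 1)).toFinset \ (s.take i).toFinset = {x} := by
    rw [hBA]; exact Finset.insert_sdiff_cancel hxA
  have hJB : (J' ∪ J'') \ (s.take (i + 1)).toFinset = (s.drop (i + 1)).toFinset := by
    rw [← hsfin]
    exact toFinset_sdiff_take s hnd (i + 1)
  unfold wexp
  rw [hJB, hBdiff, linv_singleton_right, linv_singleton_left]
  by_cases hir : i < J''.card
  · -- phase 1 : adding elements of J'' in increasing order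
    rw [if_pos hir]
    have hiB : i < lB.length := by omega
    have hxB : x = lB[i]'hiB := List.getElem_append_left hiB
    have hxJ'' : x ∈ J'' := by
      rw [← hBfin, hxB]; exact List.mem_toFinset.mpr (List.getElem_mem hiB)
    have htake : s.take i = lB.take i := by
      rw [hs, List.take_append, Nat.sub_eq_zero_of_le hiB.le,
        List.take_zero, List.append_nil]
    have hdrop1 : s.drop (i + 1) = lB.drop (i + 1) ++ lr := by
      rw [hs, List.drop_append, Nat.sub_eq_zero_of_le (by omega),
        List.drop_zero]
    have hAlt : ∀ a ∈ (s.take i).toFinset, a < x := by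
      intro a ha
      rw [htake, List.mem_toFinset] at ha
      have hxdropB : x ∈ lB.drop i := by
        rw [hxB]; exact getElem_mem_drop lB hiB
      exact pairwise_take_drop hpB i a ha x hxdropB
    have hfA : ((s.take i).toFinset.filter (fun a => a < x)) = (s.take i).toFinset :=
      Finset.filter_true_of_mem hAlt
    have hfD : ((s.drop (i + 1)).toFinset.filter (fun a => x < a))
        = (lB.drop (i + 1)).toFinset := by
      rw [hdrop1, List.toFinset_append, Finset.filter_union, hrfin]
      have h1 : ((lB.drop (i + 1)).toFinset.filter (fun a => x < a))
          = (lB.drop (i + 1)).toFinset := by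
        refine Finset.filter_true_of_mem fun d hd => ?_
        rw [List.mem_toFinset] at hd
        refine pairwise_take_drop hpB (i + 1) x ?_ d hd
        rw [hxB]; exact getElem_mem_take lB hiB
      have h2 : (J'.filter (fun a => x < a)) = ∅ := by
        refine Finset.filter_false_of_mem fun a ha => ?_
        have := hlt a ha x hxJ''
        omega
      rw [h1, h2, Finset.union_empty]
    have hcA : (s.take i).toFinset.card = i := by
      rw [htake]; exact card_toFinset_take lB hndB hiB.le
    have hcD : (lB.drop (i + 1)).toFinset.card = J''.card - (i + 1) := by
      rw [card_toFinset_drop lB hndB, hlenB]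
    have hxJ' : x ∉ J' := by
      intro hmem
      have hxlB : x ∈ lB := by rw [hxB]; exact List.getElem_mem hiB
      have hxlr : x ∈ lr := by rw [← hrfin, List.mem_toFinset] at hmem; exact hmem
      exact (List.nodup_append'.mp hnd).2.2 hxlB hxlr
    have hinter : ({x} ∩ J') = ∅ := Finset.singleton_inter_of_notMem hxJ'
    rw [hfA, hfD, hcA, hcD, hinter]
    simp only [Finset.card_empty, Nat.cast_zero, mul_zero, add_zero]
    omega
  · -- phase 2 : adding elements of J' in decreasing order
    rw [if_neg hir]
    push_neg at hir
    have hiB' : lB.length ≤ i := by omega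
    have hir2 : i - lB.length < lr.length := by omega
    have hxr : x = lr[i - lB.length]'hir2 := List.getElem_append_right hiB'
    have hxJ' : x ∈ J' := by
      rw [← hrfin, hxr]; exact List.mem_toFinset.mpr (List.getElem_mem hir2)
    have htake : s.take i = lB ++ lr.take (i - lB.length) := by
      rw [hs, List.take_append, List.take_of_length_le hiB']
    have hdrop1 : s.drop (i + 1) = lr.drop (i - lB.length + 1) := by
      rw [hs, List.drop_append, List.drop_eq_nil_of_le (by omega),
        List.nil_append]
      congr 1
      omega
    have hAgt : ∀ a ∈ (s.take i).toFinset, x < a := by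
      intro a ha
      rw [htake, List.toFinset_append, Finset.mem_union] at ha
      rcases ha with ha | ha
      · exact hlt x hxJ' a (hBfin ▸ ha)
      · rw [List.mem_toFinset] at ha
        have hxdropr : x ∈ lr.drop (i - lB.length) := by
          rw [hxr]; exact getElem_mem_drop lr hir2
        exact pairwise_take_drop hpr (i - lB.length) a ha x hxdropr
    have hfA : ((s.take i).toFinset.filter (fun a => a < x)) = ∅ := by
      refine Finset.filter_false_of_mem fun a ha => ?_
      have := hAgt a ha; omega
    have hfD : ((s.drop (i + 1)).toFinset.filter (fun a => x < a)) = ∅ := by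
      refine Finset.filter_false_of_mem fun d hd => ?_
      rw [hdrop1, List.mem_toFinset] at hd
      have hxtaker : x ∈ lr.take (i - lB.length + 1) := by
        rw [hxr]; exact getElem_mem_take lr hir2
      have := pairwise_take_drop hpr (i - lB.length + 1) x hxtaker d hd
      omega
    have hcD : (s.drop (i + 1)).toFinset.card = J'.card - (i - lB.length + 1) := by
      rw [hdrop1, card_toFinset_drop lr hndr, hlenr]
    have hinter : ({x} ∩ J') = {x} := Finset.singleton_inter_of_mem hxJ'
    rw [hfA, hfD, hcD, hinter]
    simp only [Finset.card_empty, Nat.cast_zero, Finset.card_singleton, Nat.cast_one,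
      mul_one, neg_zero, zero_sub, neg_zero]
    push_cast [Nat.cast_sub (by omega : i - lB.length + 1 ≤ J'.card)]
    omega

private lemma sum_formula (r' r'' : ℕ) (c : ℤ) :
    ∑ i ∈ Finset.range (r'' + r'),
        (if i < r'' then (1 : ℤ) - r'' else 2 * ((r' : ℤ) + r'' - 1 - i) - c)
      = (r' : ℤ) * (r' - 1) - r'' * (r'' - 1) - c * r' := by
  rw [Finset.range_eq_Ico,
    ← Finset.sum_Ico_consecutive _ (Nat.zero_le r'') (Nat.le_add_right r'' r')]
  have hA : ∑ i ∈ Finset.Ico 0 r'',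
      (if i < r'' then (1 : ℤ) - r'' else 2 * ((r' : ℤ) + r'' - 1 - i) - c)
      = (r'' : ℤ) * (1 - r'') := by
    rw [← Finset.range_eq_Ico]
    calc ∑ i ∈ Finset.range r'',
        (if i < r'' then (1 : ℤ) - r'' else 2 * ((r' : ℤ) + r'' - 1 - i) - c)
        = ∑ _i ∈ Finset.range r'', ((1 : ℤ) - r'') :=
          Finset.sum_congr rfl fun i hi => if_pos (Finset.mem_range.mp hi)
      _ = (r'' : ℤ) * (1 - r'') := by
          rw [Finset.sum_const, Finset.card_range, nsmul_eq_mul]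
  have hB : ∑ i ∈ Finset.Ico r'' (r'' + r'),
      (if i < r'' then (1 : ℤ) - r'' else 2 * ((r' : ℤ) + r'' - 1 - i) - c)
      = (r' : ℤ) * (r' - 1) - r' * c := by
    rw [Finset.sum_Ico_eq_sum_range]
    simp only [Nat.add_sub_cancel_left]
    calc ∑ t ∈ Finset.range r',
        (if r'' + t < r'' then (1 : ℤ) - r'' else 2 * ((r' : ℤ) + r'' - 1 - (r'' + t)) - c)
        = ∑ t ∈ Finset.range r', (2 * ((r' : ℤ) - 1 - t) - c) := by
          refine Finset.sum_congr rfl fun t ht => ?_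
          rw [if_neg (by omega)]
          ring
      _ = (r' : ℤ) * (r' - 1) - r' * c := sum_phase2 r' c
  rw [hA, hB]
  ring

/-- The weight of the distinguished maximal chain `π^{1̂}` equals
`(−q)^{|J'|(|J'|−1) − |J''|(|J''|−1)} · α_∅^J`. -/
theorem stmt_12 {k : Type*} [Field k] (q : k) (hq : q ≠ 0)
    (I J' J'' : Finset ℕ) (hdisj : Disjoint J' J'')
    (hlt : ∀ a ∈ J', ∀ b ∈ J'', a < b) (hI : Disjoint I (J' ∪ J'')) :
    wt q I J' J'' (piOneHat J' J'')
      = (-q) ^ ((J'.card : ℤ) * ((J'.card : ℤ) - 1)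
            - (J''.card : ℤ) * ((J''.card : ℤ) - 1))
        * alphaWt q I J' J'' ∅ (J' ∪ J'') := by
  have hq' : (-q) ≠ 0 := neg_ne_zero.mpr hq
  have hE0 : wexp I J' J'' ∅ (J' ∪ J'') = -(I.card : ℤ) * J'.card := by
    unfold wexp
    rw [Finset.sdiff_self, Finset.sdiff_empty, Finset.union_inter_cancel_left]
    simp [linv]
  rcases Nat.eq_zero_or_pos (sortedJ J' J'').length with hn | hn
  · -- degenerate case `J' = J'' = ∅`
    have hcards : J''.card = 0 ∧ J'.card = 0 := by
      have := sortedJ_length J' J''; omega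
    have h1 : J' = ∅ := Finset.card_eq_zero.mp hcards.2
    have h2 : J'' = ∅ := Finset.card_eq_zero.mp hcards.1
    subst h1; subst h2
    have hs0 : sortedJ (∅ : Finset ℕ) (∅ : Finset ℕ) = [] := by simp [sortedJ]
    have hp : piOneHat (∅ : Finset ℕ) (∅ : Finset ℕ) = [] := by
      simp [piOneHat, hs0, chainOf]
    unfold wt
    rw [hp]
    simp [elt]
  · -- main case
    have hseq : sortedJ J' J'' = J''.sort (· ≤ ·) ++ (J'.sort (· ≤ ·)).reverse := rfl
    have hstep : ∀ i < (sortedJ J' J'').length,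
        wexp I J' J'' ((sortedJ J' J'').take i).toFinset
            ((sortedJ J' J'').take (i + 1)).toFinset
          = if i < J''.card then (1 : ℤ) - J''.card
            else 2 * ((J'.card : ℤ) + J''.card - 1 - i) - I.card := by
      intro i hi
      rw [hseq] at hi ⊢
      exact step_exp I J' J'' _ _ (Finset.sort_toFinset _ _)
        (by rw [List.toFinset_reverse]; exact Finset.sort_toFinset _ _)
        (Finset.sortedLT_sort _).pairwise
        (List.pairwise_reverse.mpr (Finset.sortedLT_sort _).pairwise)
        (by rw [← hseq]; exact sortedJ_nodup J' J'' hdisj) hlt hi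
    have hL : (piOneHat J' J'').length = (sortedJ J' J'').length - 1 := by
      simp [piOneHat, chainOf]
    have h1 : wt q I J' J'' (piOneHat J' J'')
        = ∏ i ∈ Finset.range (sortedJ J' J'').length,
            (-q) ^ wexp I J' J'' ((sortedJ J' J'').take i).toFinset
              ((sortedJ J' J'').take (i + 1)).toFinset := by
      unfold wt
      rw [hL, Nat.sub_add_cancel hn]
      refine Finset.prod_congr rfl fun i hi => ?_
      rw [Finset.mem_range] at hi
      unfold alphaWt
      rw [elt_piOneHat J' J'' hi.le, elt_piOneHat J' J'' hi]
    rw [h1, prod_zpow' _ hq']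
    unfold alphaWt
    rw [hE0, ← zpow_add₀ hq']
    congr 1
    calc ∑ i ∈ Finset.range (sortedJ J' J'').length,
        wexp I J' J'' ((sortedJ J' J'').take i).toFinset
          ((sortedJ J' J'').take (i + 1)).toFinset
        = ∑ i ∈ Finset.range (sortedJ J' J'').length,
            (if i < J''.card then (1 : ℤ) - J''.card
              else 2 * ((J'.card : ℤ) + J''.card - 1 - i) - I.card) :=
          Finset.sum_congr rfl fun i hi => hstep i (Finset.mem_range.mp hi)
      _ = ∑ i ∈ Finset.range (J''.card + J'.card),
            (if i < J''.card then (1 : ℤ) - J''.card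
              else 2 * ((J'.card : ℤ) + J''.card - 1 - i) - I.card) := by
          rw [sortedJ_length]
      _ = (J'.card : ℤ) * (J'.card - 1) - J''.card * (J''.card - 1)
            - (I.card : ℤ) * J'.card := sum_formula J'.card J''.card I.card
      _ = (J'.card : ℤ) * ((J'.card : ℤ) - 1) - (J''.card : ℤ) * ((J''.card : ℤ) - 1)
            + -(I.card : ℤ) * J'.card := by ring
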